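/- For every 2-bounded coloring χ of the 2-element subsets of ℕ (with values in an arbitrary set of colors C) there exists an infinite set Y ⊆ ℕ that is polychromatic for χ. -/

import Mathlib

/-- `Y` is polychromatic for the coloring `χ`, given as a function on ordered pairs `a < b`:
distinct pairs from `Y` receive distinct colors. -/
def Polychromatic {C : Type*} (χ : ℕ → ℕ → C) (Y : Set ℕ) : Prop :=
  ∀ a b c d : ℕ, a ∈ Y → b ∈ Y → c ∈ Y → d ∈ Y → a < b → c < d →
    χ a b = χ c d → a = c ∧ b = d

/-- `χ` is 2-bounded: every color is received by at most two pairs. -/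
def TwoBounded {C : Type*} (χ : ℕ → ℕ → C) : Prop :=
  ∀ c : C, {p : ℕ × ℕ | p.1 < p.2 ∧ χ p.1 p.2 = c}.encard ≤ 2

section Aux

variable {C : Type*} {χ : ℕ → ℕ → C}

lemma no_three (hχ : TwoBounded χ) {p q r : ℕ × ℕ}
    (hp1 : p.1 < p.2) (hq1 : q.1 < q.2) (hr1 : r.1 < r.2)
    (hpq : χ p.1 p.2 = χ q.1 q.2) (hpr : χ p.1 p.2 = χ r.1 r.2)
    (h1 : p ≠ q) (h2 : p ≠ r) (h3 : q ≠ r) : False := by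
  have hs : ({p, q, r} : Set (ℕ × ℕ)) ⊆ {x | x.1 < x.2 ∧ χ x.1 x.2 = χ p.1 p.2} := by
    rintro x (rfl | rfl | rfl)
    · exact ⟨hp1, rfl⟩
    · exact ⟨hq1, hpq.symm⟩
    · exact ⟨hr1, hpr.symm⟩
  have h3' : ({p, q, r} : Set (ℕ × ℕ)).encard = 3 := by
    rw [Set.encard_insert_of_notMem (by simp [h1, h2]), Set.encard_pair h3]
    rfl
  have := (Set.encard_mono hs).trans (hχ (χ p.1 p.2))
  rw [h3'] at this
  norm_num at this

lemma class_finite (hχ : TwoBounded χ) (c : C) :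
    {p : ℕ × ℕ | p.1 < p.2 ∧ χ p.1 p.2 = c}.Finite := by
  rw [← Set.encard_lt_top_iff]
  exact lt_of_le_of_lt (hχ c) (lt_top_iff_ne_top.mpr (by simp))

structure Cond (χ : ℕ → ℕ → C) where
  F : Finset ℕ
  A : Set ℕ
  infA : A.Infinite
  lt : ∀ a ∈ F, ∀ y ∈ A, a < y
  sep : ∀ a ∈ F, ∀ b ∈ F, a < b → ∀ y ∈ A, χ a y ≠ χ b y
  poly : ∀ a ∈ F, ∀ b ∈ F, ∀ c ∈ F, ∀ d ∈ F, a < b → c < d → χ a b = χ c d → a = c ∧ b = d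

lemma step (hχ : TwoBounded χ) (co : Cond χ) :
    ∃ co' : Cond χ, co.F ⊆ co'.F ∧ co.F.card < co'.F.card := by
  classical
  set F := co.F with hF
  set A := co.A with hA
  -- the finite set of "cross-collision" bad second coordinates
  set base : Set (ℕ × ℕ) :=
    {p : ℕ × ℕ | p.1 < p.2 ∧ ∃ a ∈ F, ∃ b ∈ F, a < b ∧ χ p.1 p.2 = χ a b} with hbase
  have hbasefin : base.Finite := by
    have : base ⊆ ⋃ a ∈ (F : Set ℕ), ⋃ b ∈ (F : Set ℕ),
        {p : ℕ × ℕ | p.1 < p.2 ∧ χ p.1 p.2 = χ a b} := by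
      rintro p ⟨h1, a, ha, b, hb, hab, hc⟩
      simp only [Set.mem_iUnion]
      exact ⟨a, ha, b, hb, h1, hc⟩
    exact Set.Finite.subset (Set.Finite.biUnion F.finite_toSet fun a _ =>
      Set.Finite.biUnion F.finite_toSet fun b _ => class_finite hχ _) this
  set E : Set ℕ := Prod.snd '' base with hE
  have hEfin : E.Finite := hbasefin.image _
  set G : ℕ → Set ℕ := fun x => {y | y ∈ A ∧ x < y ∧ ∀ a ∈ F, χ a y ≠ χ x y} with hG
  -- key claim: some x ∈ A \ E has G x infinite
  have key : ∃ x ∈ A \ E, (G x).Infinite := by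
    by_contra hcon
    push_neg at hcon
    try simp only [Set.not_infinite] at hcon
    obtain ⟨X, hXsub, hXcard⟩ :=
      (co.infA.diff hEfin).exists_subset_card_eq (F.card + 1)
    set T : Set ℕ := (⋃ x ∈ (X : Set ℕ), G x) ∪ ⋃ x ∈ (X : Set ℕ), Set.Iic x with hT
    have hTfin : T.Finite := by
      apply Set.Finite.union
      · exact Set.Finite.biUnion X.finite_toSet fun x hx =>
          hcon x (hXsub (Finset.mem_coe.mpr hx))
      · exact Set.Finite.biUnion X.finite_toSet fun x _ => Set.finite_Iic x
    obtain ⟨y, hyA, hyT⟩ := (co.infA.diff hTfin).nonempty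
    have hwit : ∀ x ∈ X, ∃ a ∈ F, χ a y = χ x y := by
      intro x hx
      have hxy : x < y := by
        by_contra h
        exact hyT (Or.inr (Set.mem_biUnion hx (not_lt.mp h)))
      have hyG : y ∉ G x := fun h => hyT (Or.inl (Set.mem_biUnion hx h))
      simp only [hG, Set.mem_setOf_eq, not_and, not_forall] at hyG
      obtain ⟨a, ha, hne⟩ := hyG hyA hxy
      exact ⟨a, ha, not_not.mp hne⟩
    set f : ℕ → ℕ := fun x => if hx : x ∈ X then (hwit x hx).choose else 0 with hf
    have hmaps : ∀ x ∈ X, f x ∈ F := by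
      intro x hx
      simp only [hf, dif_pos hx]
      exact (hwit x hx).choose_spec.1
    obtain ⟨x1, hx1, x2, hx2, hne, hfeq⟩ :=
      Finset.exists_ne_map_eq_of_card_lt_of_maps_to (by omega) hmaps
    have hs1 : χ (f x1) y = χ x1 y := by
      simp only [hf, dif_pos hx1]; exact (hwit x1 hx1).choose_spec.2
    have hs2 : χ (f x1) y = χ x2 y := by
      rw [hfeq]; simp only [hf, dif_pos hx2]; exact (hwit x2 hx2).choose_spec.2
    have hx1A : x1 ∈ A := (hXsub (Finset.mem_coe.mpr hx1)).1
    have hx2A : x2 ∈ A := (hXsub (Finset.mem_coe.mpr hx2)).1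
    have haF : f x1 ∈ F := hmaps x1 hx1
    have hax1 : f x1 < x1 := co.lt _ haF x1 hx1A
    have hax2 : f x1 < x2 := co.lt _ haF x2 hx2A
    have hx1y : x1 < y := by
      by_contra h
      exact hyT (Or.inr (Set.mem_biUnion hx1 (not_lt.mp h)))
    have hx2y : x2 < y := by
      by_contra h
      exact hyT (Or.inr (Set.mem_biUnion hx2 (not_lt.mp h)))
    exact no_three hχ (p := (f x1, y)) (q := (x1, y)) (r := (x2, y))
      (lt_trans hax1 hx1y) hx1y hx2y hs1 hs2
      (by simp [Prod.ext_iff]; omega) (by simp [Prod.ext_iff]; omega)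
      (by simp [Prod.ext_iff]; omega)
  obtain ⟨x, ⟨hxA, hxE⟩, hGinf⟩ := key
  have hxgt : ∀ a ∈ F, a < x := fun a ha => co.lt a ha x hxA
  have hxF : x ∉ F := fun h => lt_irrefl x (hxgt x h)
  refine ⟨⟨insert x F, G x, hGinf, ?_, ?_, ?_⟩, Finset.subset_insert x F, ?_⟩
  · intro a ha y hy
    rcases Finset.mem_insert.mp ha with rfl | ha
    · exact hy.2.1
    · exact co.lt a ha y hy.1
  · intro a ha b hb hab y hy
    rcases Finset.mem_insert.mp hb with hbx | hbF
    · rcases Finset.mem_insert.mp ha with hax | haF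
      · omega
      · subst hbx; exact fun h => hy.2.2 a haF h
    · rcases Finset.mem_insert.mp ha with hax | haF
      · exact absurd hab (by rw [hax]; exact not_lt.mpr (le_of_lt (hxgt b hbF)))
      · exact co.sep a haF b hbF hab y hy.1
  · intro a ha b hb c hc d hd hab hcd heq
    have hle : ∀ z ∈ insert x F, z ≤ x := by
      intro z hz
      rcases Finset.mem_insert.mp hz with hzx | hzF
      · omega
      · exact le_of_lt (hxgt z hzF)
    have haF : a ∈ F := by
      rcases Finset.mem_insert.mp ha with hax | h
      · have := hle b hb; omega
      · exact h
    have hcF : c ∈ F := by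
      rcases Finset.mem_insert.mp hc with hcx | h
      · have := hle d hd; omega
      · exact h
    rcases Finset.mem_insert.mp hb with hbx | hbF <;>
      rcases Finset.mem_insert.mp hd with hdx | hdF
    · -- b = x = d
      refine ⟨?_, hbx.trans hdx.symm⟩
      rw [hbx] at heq hab
      rw [hdx] at hcd
      rw [hdx] at heq
      rcases lt_trichotomy a c with h | h | h
      · exact absurd heq (co.sep a haF c hcF h x hxA)
      · exact h
      · exact absurd heq.symm (co.sep c hcF a haF h x hxA)
    · -- b = x, d ∈ F : cross collision, contradicts x ∉ E
      have : b ∈ E := ⟨(a, b), ⟨hab, c, hcF, d, hdF, hcd, heq⟩, rfl⟩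
      rw [hbx] at this
      exact (hxE this).elim
    · -- d = x, b ∈ F
      have : d ∈ E := ⟨(c, d), ⟨hcd, a, haF, b, hbF, hab, heq.symm⟩, rfl⟩
      rw [hdx] at this
      exact (hxE this).elim
    · exact co.poly a haF b hbF c hcF d hdF hab hcd heq
  · rw [Finset.card_insert_of_notMem hxF]; omega

noncomputable def seq (hχ : TwoBounded χ) : ℕ → Cond χ
  | 0 => ⟨∅, Set.univ, Set.infinite_univ, by simp, by simp, by simp⟩
  | n + 1 => (step hχ (seq hχ n)).choose

lemma seq_mono (hχ : TwoBounded χ) (n : ℕ) :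
    (seq hχ n).F ⊆ (seq hχ (n + 1)).F := (step hχ (seq hχ n)).choose_spec.1

lemma seq_card (hχ : TwoBounded χ) (n : ℕ) : n ≤ (seq hχ n).F.card := by
  induction n with
  | zero => simp
  | succ n ih =>
    have := (step hχ (seq hχ n)).choose_spec.2
    have : (seq hχ n).F.card < (seq hχ (n+1)).F.card := this
    omega

lemma seq_mono' (hχ : TwoBounded χ) {m n : ℕ} (h : m ≤ n) :
    (seq hχ m).F ⊆ (seq hχ n).F := by
  induction n with
  | zero => simp_all
  | succ n ih =>
    rcases Nat.lt_or_ge m (n+1) with h' | h'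
    · exact (ih (by omega)).trans (seq_mono hχ n)
    · have : m = n + 1 := by omega
      subst this; rfl
end Aux

/-- The rainbow Ramsey theorem: every 2-bounded coloring of pairs of naturals admits an
infinite polychromatic set. -/
theorem rainbow_ramsey {C : Type*} (χ : ℕ → ℕ → C) (hχ : TwoBounded χ) :
    ∃ Y : Set ℕ, Y.Infinite ∧ Polychromatic χ Y := by
  refine ⟨⋃ n, ((seq hχ n).F : Set ℕ), ?_, ?_⟩
  · intro hfin
    have hsub : ∀ n, (seq hχ n).F ⊆ hfin.toFinset := by
      intro n a ha
      exact hfin.mem_toFinset.mpr (Set.mem_iUnion.mpr ⟨n, ha⟩)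
    have := Finset.card_le_card (hsub (hfin.toFinset.card + 1))
    have := seq_card hχ (hfin.toFinset.card + 1)
    omega
  · intro a b c d ha hb hc hd hab hcd heq
    obtain ⟨na, hna⟩ := Set.mem_iUnion.mp ha
    obtain ⟨nb, hnb⟩ := Set.mem_iUnion.mp hb
    obtain ⟨nc, hnc⟩ := Set.mem_iUnion.mp hc
    obtain ⟨nd, hnd⟩ := Set.mem_iUnion.mp hd
    set N := max (max na nb) (max nc nd) with hN
    exact (seq hχ N).poly a (seq_mono' hχ (by omega) hna) b (seq_mono' hχ (by omega) hnb)
      c (seq_mono' hχ (by omega) hnc) d (seq_mono' hχ (by omega) hnd) hab hcd heq
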